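/- (Theorem 2, achievability by a local strategy.) For every γ ∈ (0,1], set Q_a = γ·(I₂ + (−1)^a X)/2 and R_b = γ·(I₂ + (−1)^b X)/2 for a,b ∈ {0,1}, and define Π₀ = Q₀⊗R₀ + Q₁⊗R₁, Π₁ = Q₀⊗R₁ + Q₁⊗R₀, Π_∅ = I₄ − Π₀ − Π₁. Then (Π₀,Π₁,Π_∅) is a γ-admissible triple, all three elements are PPT, and V = (1/2)·Tr[ρ₀Π₀ + ρ₁Π₁] = γ²·(2 + 1/√2)/4. -/

import Mathlib

open Matrix Complex Kronecker BigOperators ComplexOrder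

noncomputable section

abbrev Mat2 := Matrix (Fin 2) (Fin 2) ℂ
abbrev Mat4 := Matrix (Fin 2 × Fin 2) (Fin 2 × Fin 2) ℂ

/-- Pauli X matrix -/
def PX : Mat2 := !![0, 1; 1, 0]

/-- Pauli Y matrix -/
def PY : Mat2 := !![0, -Complex.I; Complex.I, 0]

/-- sign (−1)^b for a bit b -/
def bsign (b : Bool) : ℂ := if b then -1 else 1

/-- boolean function f(x̄,ȳ) = (x₁·y₁) XOR x₂ XOR y₂ -/
def fxy (x y : Bool × Bool) : Bool := (((x.1 && y.1)).xor x.2).xor y.2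

/-- qubit input states ω_{x̄}: ω_{(0,x₂)} = (I+(−1)^{x₂}X)/2, ω_{(1,x₂)} = (I+(−1)^{x₂}Y)/2 -/
def omg (x : Bool × Bool) : Mat2 :=
  (1/2 : ℂ) • ((1 : Mat2) + bsign x.2 • (if x.1 then PY else PX))

/-- qubit input states τ_{ȳ} = (I+(−1)^{y₂}(X+(−1)^{y₁}Y)/√2)/2 -/
def tau (y : Bool × Bool) : Mat2 :=
  (1/2 : ℂ) • ((1 : Mat2) + (bsign y.2 / (Real.sqrt 2 : ℂ)) • (PX + bsign y.1 • PY))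

/-- averaged input states ρ₀ (for c = false) and ρ₁ (for c = true) -/
def rho (c : Bool) : Mat4 :=
  (1/8 : ℂ) • ∑ x : Bool × Bool, ∑ y : Bool × Bool,
    (if fxy x y = c then omg x ⊗ₖ tau y else 0)

/-- standard basis vectors of ℂ⁴ ≅ ℂ² ⊗ ℂ² -/
def ket (i j : Fin 2) : (Fin 2 × Fin 2) → ℂ := fun p => if p = (i, j) then 1 else 0

def PhiP : (Fin 2 × Fin 2) → ℂ := fun p => (1 / (Real.sqrt 2 : ℂ)) * (ket 0 0 p + ket 1 1 p)
def PhiM : (Fin 2 × Fin 2) → ℂ := fun p => (1 / (Real.sqrt 2 : ℂ)) * (ket 0 0 p - ket 1 1 p)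
def PsiP : (Fin 2 × Fin 2) → ℂ := fun p => (1 / (Real.sqrt 2 : ℂ)) * (ket 0 1 p + ket 1 0 p)
def PsiM : (Fin 2 × Fin 2) → ℂ := fun p => (1 / (Real.sqrt 2 : ℂ)) * (ket 0 1 p - ket 1 0 p)

/-- rank one projector |v⟩⟨v| -/
def proj (v : (Fin 2 × Fin 2) → ℂ) : Mat4 := Matrix.vecMulVec v (star v)

/-- a γ-admissible measurement triple -/
def Admissible (γ : ℝ) (P0 P1 Pe : Mat4) : Prop :=
  P0.PosSemidef ∧ P1.PosSemidef ∧ Pe.PosSemidef ∧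
  P0 + P1 + Pe = 1 ∧
  ∀ x y : Bool × Bool, ((omg x ⊗ₖ tau y) * Pe).trace = 1 - (γ : ℂ)^2

/-- guessing value V = (1/2)·Tr[ρ₀Π₀ + ρ₁Π₁] (a real number) -/
def Gval (P0 P1 : Mat4) : ℝ := (1/2) * ((rho false * P0 + rho true * P1).trace).re

/-- partial transpose over the second tensor factor -/
def ptransB (M : Mat4) : Mat4 := Matrix.of fun p q => M (p.1, q.2) (q.1, p.2)

/-- positivity under partial transpose -/
def IsPPT (M : Mat4) : Prop := M.PosSemidef ∧ (ptransB M).PosSemidef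

/-- local measurement operators Q_a = γ(I + (−1)^a X)/2 -/
def Qloc (γ : ℝ) (a : Bool) : Mat2 := ((γ/2 : ℝ) : ℂ) • ((1 : Mat2) + bsign a • PX)


namespace PPTaux

def Pp : Mat2 := !![1/2, 1/2; 1/2, 1/2]
def Pm : Mat2 := !![1/2, -(1/2); -(1/2), 1/2]
def E0 : Mat4 := Pp ⊗ₖ Pp + Pm ⊗ₖ Pm
def E1 : Mat4 := Pp ⊗ₖ Pm + Pm ⊗ₖ Pp

lemma Qloc_false (γ : ℝ) : Qloc γ false = (γ:ℂ) • Pp := by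
  ext i j
  fin_cases i <;> fin_cases j <;>
    simp [Qloc, Pp, PX, bsign, Matrix.one_apply] <;> ring

lemma Qloc_true (γ : ℝ) : Qloc γ true = (γ:ℂ) • Pm := by
  ext i j
  fin_cases i <;> fin_cases j <;>
    simp [Qloc, Pm, PX, bsign, Matrix.one_apply] <;> ring

lemma psd_smul_proj (c : ℝ) (hc : 0 ≤ c) (M : Mat4) (hH : Mᴴ = M) (hI : M * M = M) :
    ((c:ℂ) • M).PosSemidef := by
  have h : (c:ℂ) • M = ((Real.sqrt c : ℂ) • M)ᴴ * ((Real.sqrt c : ℂ) • M) := by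
    rw [conjTranspose_smul, hH, smul_mul_smul_comm, hI]
    congr 1
    rw [Complex.star_def, Complex.conj_ofReal, ← Complex.ofReal_mul, Real.mul_self_sqrt hc]
  rw [h]; exact posSemidef_conjTranspose_mul_self _

lemma Pp_sq : Pp * Pp = Pp := by
  ext i j; fin_cases i <;> fin_cases j <;>
    simp [Pp, Matrix.mul_apply, Fin.sum_univ_two] <;> norm_num
lemma Pm_sq : Pm * Pm = Pm := by
  ext i j; fin_cases i <;> fin_cases j <;>
    simp [Pm, Matrix.mul_apply, Fin.sum_univ_two] <;> norm_num
lemma Pp_Pm : Pp * Pm = 0 := by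
  ext i j; fin_cases i <;> fin_cases j <;>
    simp [Pp, Pm, Matrix.mul_apply, Fin.sum_univ_two] <;> norm_num
lemma Pm_Pp : Pm * Pp = 0 := by
  ext i j; fin_cases i <;> fin_cases j <;>
    simp [Pp, Pm, Matrix.mul_apply, Fin.sum_univ_two] <;> norm_num
lemma Pp_add_Pm : Pp + Pm = 1 := by
  ext i j; fin_cases i <;> fin_cases j <;>
    simp [Pp, Pm, Matrix.one_apply] <;> norm_num

lemma E0_sq : E0 * E0 = E0 := by
  simp only [E0, add_mul, mul_add, ← Matrix.mul_kronecker_mul, Pp_sq, Pm_sq, Pp_Pm, Pm_Pp]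
  simp [Matrix.kroneckerMap_zero_left, Matrix.kroneckerMap_zero_right]
lemma E1_sq : E1 * E1 = E1 := by
  simp only [E1, add_mul, mul_add, ← Matrix.mul_kronecker_mul, Pp_sq, Pm_sq, Pp_Pm, Pm_Pp]
  simp [Matrix.kroneckerMap_zero_left, Matrix.kroneckerMap_zero_right]

lemma E0_herm : E0ᴴ = E0 := by
  ext ⟨i,j⟩ ⟨k,l⟩
  fin_cases i <;> fin_cases j <;> fin_cases k <;> fin_cases l <;>
    simp [E0, Pp, Pm] <;> norm_num
lemma E1_herm : E1ᴴ = E1 := by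
  ext ⟨i,j⟩ ⟨k,l⟩
  fin_cases i <;> fin_cases j <;> fin_cases k <;> fin_cases l <;>
    simp [E1, Pp, Pm] <;> norm_num

lemma E0_add_E1 : E0 + E1 = 1 := by
  have h : ((Pp + Pm) ⊗ₖ (Pp + Pm) : Mat4) = 1 := by
    rw [Pp_add_Pm, Matrix.one_kronecker_one]
  rw [Matrix.add_kronecker, Matrix.kronecker_add, Matrix.kronecker_add] at h
  rw [E0, E1, ← h]; abel

lemma ptransB_E0 : ptransB E0 = E0 := by
  ext ⟨i,j⟩ ⟨k,l⟩
  fin_cases i <;> fin_cases j <;> fin_cases k <;> fin_cases l <;>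
    simp [ptransB, E0, Pp, Pm]
lemma ptransB_E1 : ptransB E1 = E1 := by
  ext ⟨i,j⟩ ⟨k,l⟩
  fin_cases i <;> fin_cases j <;> fin_cases k <;> fin_cases l <;>
    simp [ptransB, E1, Pp, Pm]
lemma ptransB_smul (c : ℂ) (M : Mat4) : ptransB (c • M) = c • ptransB M := by
  ext ⟨i,j⟩ ⟨k,l⟩; simp [ptransB]
lemma ptransB_one : ptransB (1 : Mat4) = 1 := by
  ext ⟨i,j⟩ ⟨k,l⟩
  fin_cases i <;> fin_cases j <;> fin_cases k <;> fin_cases l <;>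
    simp [ptransB, Matrix.one_apply, Prod.ext_iff]

lemma trace_omg (x : Bool × Bool) : (omg x).trace = 1 := by
  obtain ⟨x1, x2⟩ := x
  cases x1 <;> cases x2 <;>
    simp [omg, PX, PY, bsign, Matrix.trace, Fin.sum_univ_two, Matrix.one_apply] <;> norm_num
lemma trace_tau (y : Bool × Bool) : (tau y).trace = 1 := by
  obtain ⟨y1, y2⟩ := y
  cases y1 <;> cases y2 <;>
    simp [tau, PX, PY, bsign, Matrix.trace, Fin.sum_univ_two, Matrix.one_apply] <;> norm_num

lemma omg_Pp (x : Bool × Bool) : (omg x * Pp).trace = (1 + (if x.1 then 0 else bsign x.2))/2 := by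
  obtain ⟨x1, x2⟩ := x
  cases x1 <;> cases x2 <;>
    simp [omg, Pp, PX, PY, bsign, Matrix.trace, Fin.sum_univ_two, Matrix.mul_apply,
      Matrix.one_apply] <;> ring
lemma omg_Pm (x : Bool × Bool) : (omg x * Pm).trace = (1 - (if x.1 then 0 else bsign x.2))/2 := by
  obtain ⟨x1, x2⟩ := x
  cases x1 <;> cases x2 <;>
    simp [omg, Pm, PX, PY, bsign, Matrix.trace, Fin.sum_univ_two, Matrix.mul_apply,
      Matrix.one_apply] <;> ring
lemma tau_Pp (y : Bool × Bool) : (tau y * Pp).trace = (1 + bsign y.2/(Real.sqrt 2:ℂ))/2 := by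
  obtain ⟨y1, y2⟩ := y
  cases y1 <;> cases y2 <;>
    simp [tau, Pp, PX, PY, bsign, Matrix.trace, Fin.sum_univ_two, Matrix.mul_apply,
      Matrix.one_apply] <;> ring
lemma tau_Pm (y : Bool × Bool) : (tau y * Pm).trace = (1 - bsign y.2/(Real.sqrt 2:ℂ))/2 := by
  obtain ⟨y1, y2⟩ := y
  cases y1 <;> cases y2 <;>
    simp [tau, Pm, PX, PY, bsign, Matrix.trace, Fin.sum_univ_two, Matrix.mul_apply,
      Matrix.one_apply] <;> ring

lemma trace_kron_mul (A B C D : Mat2) :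
    ((A ⊗ₖ B) * (C ⊗ₖ D)).trace = (A*C).trace * (B*D).trace := by
  rw [← Matrix.mul_kronecker_mul, Matrix.trace_kronecker]

lemma term0 (x y : Bool × Bool) : ((omg x ⊗ₖ tau y) * E0).trace
    = (omg x*Pp).trace*(tau y*Pp).trace + (omg x*Pm).trace*(tau y*Pm).trace := by
  rw [E0, mul_add, trace_add, trace_kron_mul, trace_kron_mul]
lemma term1 (x y : Bool × Bool) : ((omg x ⊗ₖ tau y) * E1).trace
    = (omg x*Pp).trace*(tau y*Pm).trace + (omg x*Pm).trace*(tau y*Pp).trace := by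
  rw [E1, mul_add, trace_add, trace_kron_mul, trace_kron_mul]

lemma sqrt2_ne : (Real.sqrt 2 : ℂ) ≠ 0 := by
  simpa using Complex.ofReal_ne_zero.2 (ne_of_gt (Real.sqrt_pos.2 (by norm_num)))

lemma hS : (rho false * E0 + rho true * E1).trace = 1 + 1/(2*(Real.sqrt 2:ℂ)) := by
  have h2 := sqrt2_ne
  rw [trace_add]
  simp only [rho, Matrix.smul_mul, Matrix.sum_mul, ite_mul, zero_mul,
    trace_smul, trace_sum, smul_eq_mul]
  simp only [Fintype.sum_prod_type, Fintype.sum_bool, fxy,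
    Bool.xor_false, Bool.xor_true, Bool.and_false, Bool.and_true, Bool.false_and,
    Bool.true_and, Bool.not_true, Bool.not_false, apply_ite Matrix.trace, trace_zero,
    reduceIte, term0, term1, omg_Pp, omg_Pm, tau_Pp, tau_Pm, bsign,
      Bool.false_eq_true, Bool.true_eq_false]
  field_simp
  ring_nf

end PPTaux

open PPTaux in
/-- Theorem 2, achievability by a local strategy. -/
theorem ppt_achievable (γ : ℝ) (hγ : 0 < γ) (hγ' : γ ≤ 1) :
    Admissible γ
      (Qloc γ false ⊗ₖ Qloc γ false + Qloc γ true ⊗ₖ Qloc γ true)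
      (Qloc γ false ⊗ₖ Qloc γ true + Qloc γ true ⊗ₖ Qloc γ false)
      (1 - (Qloc γ false ⊗ₖ Qloc γ false + Qloc γ true ⊗ₖ Qloc γ true)
         - (Qloc γ false ⊗ₖ Qloc γ true + Qloc γ true ⊗ₖ Qloc γ false)) ∧
    IsPPT (Qloc γ false ⊗ₖ Qloc γ false + Qloc γ true ⊗ₖ Qloc γ true) ∧
    IsPPT (Qloc γ false ⊗ₖ Qloc γ true + Qloc γ true ⊗ₖ Qloc γ false) ∧
    IsPPT (1 - (Qloc γ false ⊗ₖ Qloc γ false + Qloc γ true ⊗ₖ Qloc γ true)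
         - (Qloc γ false ⊗ₖ Qloc γ true + Qloc γ true ⊗ₖ Qloc γ false)) ∧
    Gval (Qloc γ false ⊗ₖ Qloc γ false + Qloc γ true ⊗ₖ Qloc γ true)
         (Qloc γ false ⊗ₖ Qloc γ true + Qloc γ true ⊗ₖ Qloc γ false)
      = γ^2 * (2 + 1/Real.sqrt 2)/4 := by
  have hQf := Qloc_false γ
  have hQt := Qloc_true γ
  have hP0 : Qloc γ false ⊗ₖ Qloc γ false + Qloc γ true ⊗ₖ Qloc γ true
      = ((γ^2 : ℝ):ℂ) • E0 := by
    rw [hQf, hQt, Matrix.smul_kronecker, Matrix.kronecker_smul,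
      Matrix.smul_kronecker, Matrix.kronecker_smul, smul_smul, smul_smul, E0, smul_add]
    push_cast; ring_nf
  have hP1 : Qloc γ false ⊗ₖ Qloc γ true + Qloc γ true ⊗ₖ Qloc γ false
      = ((γ^2 : ℝ):ℂ) • E1 := by
    rw [hQf, hQt, Matrix.smul_kronecker, Matrix.kronecker_smul,
      Matrix.smul_kronecker, Matrix.kronecker_smul, smul_smul, smul_smul, E1, smul_add]
    push_cast; ring_nf
  have hPe : (1 : Mat4) - (Qloc γ false ⊗ₖ Qloc γ false + Qloc γ true ⊗ₖ Qloc γ true)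
      - (Qloc γ false ⊗ₖ Qloc γ true + Qloc γ true ⊗ₖ Qloc γ false)
      = ((1 - γ^2 : ℝ):ℂ) • (1 : Mat4) := by
    rw [hP0, hP1, sub_sub, ← smul_add, E0_add_E1]
    push_cast
    rw [sub_smul, one_smul]
  have hγ2 : (0:ℝ) ≤ 1 - γ^2 := by nlinarith
  have psd0 : (((γ^2 : ℝ):ℂ) • E0).PosSemidef :=
    psd_smul_proj _ (sq_nonneg γ) _ E0_herm E0_sq
  have psd1 : (((γ^2 : ℝ):ℂ) • E1).PosSemidef :=
    psd_smul_proj _ (sq_nonneg γ) _ E1_herm E1_sq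
  have psde : (((1 - γ^2 : ℝ):ℂ) • (1 : Mat4)).PosSemidef :=
    psd_smul_proj _ hγ2 _ Matrix.conjTranspose_one (one_mul 1)
  refine ⟨⟨hP0 ▸ psd0, hP1 ▸ psd1, hPe ▸ psde, by abel, ?_⟩, ?_, ?_, ?_, ?_⟩
  · intro x y
    rw [hPe, Matrix.mul_smul, mul_one, trace_smul, Matrix.trace_kronecker,
      trace_omg, trace_tau, smul_eq_mul]
    push_cast; ring
  · exact ⟨hP0 ▸ psd0, by rw [hP0, ptransB_smul, ptransB_E0]; exact psd0⟩
  · exact ⟨hP1 ▸ psd1, by rw [hP1, ptransB_smul, ptransB_E1]; exact psd1⟩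
  · exact ⟨hPe ▸ psde, by rw [hPe, ptransB_smul, ptransB_one]; exact psde⟩
  · rw [Gval, hP0, hP1, Matrix.mul_smul, Matrix.mul_smul, ← smul_add, trace_smul,
      smul_eq_mul, hS]
    have h2 : Real.sqrt 2 ≠ 0 := ne_of_gt (Real.sqrt_pos.2 (by norm_num))
    have : (((γ^2 : ℝ)):ℂ) * (1 + 1/(2*(Real.sqrt 2:ℂ)))
        = ((γ^2 * (2 + 1/Real.sqrt 2)/2 : ℝ) : ℂ) := by
      push_cast
      field_simp
    rw [this, Complex.ofReal_re]
    field_simp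
    ring
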